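/- Let m, n ≥ 3 be integers. The strong deletion of any vertex v from C^3_{m,n} yields C^3_{m-1,n} (if v lies in the first block) or C^3_{m,n-1} (if v lies in the second block), and in either case the Seidel energy strictly decreases: E_S(C^3_{m,n}) > E_S(C^3_{m-1,n}) and E_S(C^3_{m,n}) > E_S(C^3_{m,n-1}); that is, the sum of the absolute values of the eigenvalues of S(m,n) strictly exceeds both that of S(m-1,n) and that of S(m,n-1). -/

import Mathlib

open Polynomial Matrix

/-- The Seidel matrix of the complete 3-uniform bipartite hypergraph `C³_{m,n}`. -/
noncomputable def seidelS (m n : ℕ) : Matrix (Fin m ⊕ Fin n) (Fin m ⊕ Fin n) ℝ :=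
  fun i j =>
    if i = j then 0
    else
      match i, j with
      | Sum.inl _, Sum.inl _ => 1 - 2 * (n : ℝ)
      | Sum.inr _, Sum.inr _ => 1 - 2 * (m : ℝ)
      | _, _ => 1 - 2 * ((m : ℝ) + (n : ℝ) - 2)

/-- Type-I hyperedge-deleted Seidel matrix. -/
noncomputable def seidelI (m n : ℕ) : Matrix (Fin m ⊕ Fin n) (Fin m ⊕ Fin n) ℝ :=
  fun i j =>
    match i, j with
    | Sum.inl a, Sum.inr b =>
        if a.val = 0 ∧ b.val ≤ 1 then 1 - 2 * ((m : ℝ) + (n : ℝ) - 3)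
        else seidelS m n (Sum.inl a) (Sum.inr b)
    | Sum.inr b, Sum.inl a =>
        if a.val = 0 ∧ b.val ≤ 1 then 1 - 2 * ((m : ℝ) + (n : ℝ) - 3)
        else seidelS m n (Sum.inr b) (Sum.inl a)
    | Sum.inr a, Sum.inr b =>
        if (a.val = 0 ∧ b.val = 1) ∨ (a.val = 1 ∧ b.val = 0) then 1 - 2 * ((m : ℝ) - 1)
        else seidelS m n (Sum.inr a) (Sum.inr b)
    | Sum.inl a, Sum.inl b => seidelS m n (Sum.inl a) (Sum.inl b)

/-- Type-II hyperedge-deleted Seidel matrix. -/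
noncomputable def seidelII (m n : ℕ) : Matrix (Fin m ⊕ Fin n) (Fin m ⊕ Fin n) ℝ :=
  fun i j =>
    match i, j with
    | Sum.inl a, Sum.inl b =>
        if (a.val = 0 ∧ b.val = 1) ∨ (a.val = 1 ∧ b.val = 0) then 1 - 2 * ((n : ℝ) - 1)
        else seidelS m n (Sum.inl a) (Sum.inl b)
    | Sum.inl a, Sum.inr b =>
        if a.val ≤ 1 ∧ b.val = 0 then 1 - 2 * ((m : ℝ) + (n : ℝ) - 3)
        else seidelS m n (Sum.inl a) (Sum.inr b)
    | Sum.inr b, Sum.inl a =>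
        if a.val ≤ 1 ∧ b.val = 0 then 1 - 2 * ((m : ℝ) + (n : ℝ) - 3)
        else seidelS m n (Sum.inr b) (Sum.inl a)
    | Sum.inr a, Sum.inr b => seidelS m n (Sum.inr a) (Sum.inr b)

/-- Seidel energy: sum of absolute values of the eigenvalues (roots of the
characteristic polynomial, with multiplicity). -/
noncomputable def seidelEnergy {k : Type*} [Fintype k] [DecidableEq k]
    (M : Matrix k k ℝ) : ℝ :=
  (M.charpoly.roots.map (fun x => |x|)).sum

/- ===== auxiliary development ===== -/

lemma my_eval_charpoly {k : Type*} [Fintype k] [DecidableEq k] (M : Matrix k k ℝ) (x : ℝ) :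
    M.charpoly.eval x = (x • (1 : Matrix k k ℝ) - M).det := by
  have h := RingHom.map_det (Polynomial.evalRingHom x) (Matrix.charmatrix M)
  rw [Matrix.charpoly]
  have h2 : eval x M.charmatrix.det = (evalRingHom x) M.charmatrix.det := rfl
  rw [h2, h]
  congr 1
  ext i j
  simp only [RingHom.mapMatrix_apply, Matrix.map_apply, Matrix.charmatrix_apply,
    Matrix.sub_apply, Matrix.smul_apply, Matrix.one_apply, Matrix.diagonal_apply]
  split <;> simp [smul_eq_mul]

noncomputable def Umat (m n : ℕ) : Matrix (Fin m ⊕ Fin n) (Fin 2) ℝ :=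
  fun k t => Sum.elim (fun _ => if t = 0 then 1 else 0) (fun _ => if t = 1 then 1 else 0) k

noncomputable def C2 (m n : ℕ) : Matrix (Fin 2) (Fin 2) ℝ :=
  !![1 - 2*(n:ℝ), 5 - 2*(m:ℝ) - 2*(n:ℝ); 5 - 2*(m:ℝ) - 2*(n:ℝ), 1 - 2*(m:ℝ)]

lemma decomp (m n : ℕ) (x : ℝ) :
    x • (1 : Matrix (Fin m ⊕ Fin n) (Fin m ⊕ Fin n) ℝ) - seidelS m n
      = Matrix.diagonal (Sum.elim (fun _ => x + (1 - 2*(n:ℝ))) (fun _ => x + (1 - 2*(m:ℝ))))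
        - Umat m n * C2 m n * (Umat m n)ᵀ := by
  ext i j
  simp only [Matrix.sub_apply, Matrix.smul_apply, Matrix.one_apply, Matrix.diagonal_apply,
    Matrix.mul_apply, Matrix.transpose_apply, Fin.sum_univ_two, seidelS, Umat, C2]
  rcases i with a | a <;> rcases j with b | b
  · by_cases h : a = b <;> simp [h, smul_eq_mul]
  · simp [smul_eq_mul]; ring
  · simp [smul_eq_mul]; ring
  · by_cases h : a = b <;> simp [h, smul_eq_mul]

lemma det_formula (m n : ℕ) (hm : 1 ≤ m) (hn : 1 ≤ n) (x : ℝ)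
    (hx1 : x + (1 - 2*(n:ℝ)) ≠ 0) (hx2 : x + (1 - 2*(m:ℝ)) ≠ 0) :
    (x • (1 : Matrix (Fin m ⊕ Fin n) (Fin m ⊕ Fin n) ℝ) - seidelS m n).det
      = (x + (1 - 2*(n:ℝ)))^(m-1) * (x + (1 - 2*(m:ℝ)))^(n-1) *
        ((x - (1 - 2*(n:ℝ))*((m:ℝ)-1)) * (x - (1 - 2*(m:ℝ))*((n:ℝ)-1))
          - (5 - 2*(m:ℝ) - 2*(n:ℝ))^2 * (m:ℝ) * (n:ℝ)) := by
  set a : ℝ := 1 - 2*(n:ℝ) with ha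
  set b : ℝ := 1 - 2*(m:ℝ) with hb
  set c : ℝ := 5 - 2*(m:ℝ) - 2*(n:ℝ) with hc
  set D : Matrix (Fin m ⊕ Fin n) (Fin m ⊕ Fin n) ℝ :=
    Matrix.diagonal (Sum.elim (fun _ => x + a) (fun _ => x + b)) with hD
  set E : Matrix (Fin m ⊕ Fin n) (Fin m ⊕ Fin n) ℝ :=
    Matrix.diagonal (Sum.elim (fun _ => (x + a)⁻¹) (fun _ => (x + b)⁻¹)) with hE
  have hDE : D * E = 1 := by
    rw [hD, hE, Matrix.diagonal_mul_diagonal]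
    ext i j
    by_cases h : i = j
    · subst h
      rcases i with k | k <;>
        simp [Matrix.diagonal_apply_eq, Matrix.one_apply, mul_inv_cancel₀ hx1, mul_inv_cancel₀ hx2]
    · simp [Matrix.diagonal_apply_ne _ h, Matrix.one_apply, h]
  have key : D - Umat m n * C2 m n * (Umat m n)ᵀ
      = D * (1 - (E * (Umat m n * C2 m n)) * (Umat m n)ᵀ) := by
    rw [Matrix.mul_sub, Matrix.mul_one, ← Matrix.mul_assoc, ← Matrix.mul_assoc, hDE, Matrix.one_mul]
  have hG : (Umat m n)ᵀ * (E * (Umat m n * C2 m n))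
      = !![(m:ℝ)*(x+a)⁻¹*a, (m:ℝ)*(x+a)⁻¹*c; (n:ℝ)*(x+b)⁻¹*c, (n:ℝ)*(x+b)⁻¹*b] := by
    ext s t
    simp only [Matrix.mul_apply, Matrix.transpose_apply, hE, Matrix.diagonal_apply,
      Fintype.sum_sum_type, Umat, C2]
    fin_cases s <;> fin_cases t <;>
      simp [Fin.sum_univ_two, Finset.sum_ite_eq, Finset.mul_sum, Finset.sum_const,
        Finset.card_univ] <;> ring
  rw [decomp, key, Matrix.det_mul, Matrix.det_one_sub_mul_comm, hG]
  have hdetD : D.det = (x + a)^m * (x + b)^n := by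
    rw [hD, Matrix.det_diagonal, Fintype.prod_sum_type]
    simp
  rw [hdetD, Matrix.det_fin_two]
  simp only [Matrix.sub_apply, Matrix.one_apply, Matrix.cons_val', Matrix.cons_val_zero,
    Matrix.cons_val_one, Matrix.head_cons, Matrix.head_fin_const, Matrix.empty_val',
    Matrix.cons_val_fin_one]
  simp only [Matrix.of_apply, Matrix.cons_val', Matrix.cons_val_zero, Matrix.cons_val_one,
    Matrix.head_cons, Matrix.empty_val', Matrix.cons_val_fin_one, if_true, if_false,
    (by decide : ((0:Fin 2) = 1) = False), (by decide : ((1:Fin 2) = 0) = False),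
    (by decide : ((0:Fin 2) = 0) = True), (by decide : ((1:Fin 2) = 1) = True)]
  have hm' : m = (m - 1) + 1 := (Nat.succ_pred_eq_of_pos hm).symm
  have hn' : n = (n - 1) + 1 := (Nat.succ_pred_eq_of_pos hn).symm
  rw [hm', hn']
  simp only [Nat.add_sub_cancel]
  rw [pow_succ, pow_succ]
  field_simp
  ring

noncomputable def tval (M N : ℝ) : ℝ := (1 - 2*N)*(M-1) + (1 - 2*M)*(N-1)
noncomputable def sval (M N : ℝ) : ℝ := Real.sqrt ((N-M)^2 + 4*(5-2*M-2*N)^2*M*N)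
noncomputable def lam1 (M N : ℝ) : ℝ := (tval M N + sval M N)/2
noncomputable def lam2 (M N : ℝ) : ℝ := (tval M N - sval M N)/2

lemma sval_sq (M N : ℝ) (hM : 0 ≤ M) (hN : 0 ≤ N) :
    (sval M N)^2 = (N-M)^2 + 4*(5-2*M-2*N)^2*M*N :=
  Real.sq_sqrt (by positivity)

lemma charpoly_eq (m n : ℕ) (hm : 1 ≤ m) (hn : 1 ≤ n) :
    (seidelS m n).charpoly
      = (X - C (2*(n:ℝ)-1))^(m-1) * (X - C (2*(m:ℝ)-1))^(n-1) *
        ((X - C (lam1 m n)) * (X - C (lam2 m n))) := by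
  apply Polynomial.eq_of_infinite_eval_eq
  apply Set.Infinite.mono (s := ({2*(n:ℝ)-1, 2*(m:ℝ)-1} : Set ℝ)ᶜ)
  swap
  · exact Set.Finite.infinite_compl ((Set.finite_singleton _).insert _)
  intro x hx
  simp only [Set.mem_compl_iff, Set.mem_insert_iff, Set.mem_singleton_iff, not_or] at hx
  obtain ⟨hx1, hx2⟩ := hx
  have hx1' : x + (1 - 2*(n:ℝ)) ≠ 0 := by intro h; apply hx1; linarith
  have hx2' : x + (1 - 2*(m:ℝ)) ≠ 0 := by intro h; apply hx2; linarith
  simp only [Set.mem_setOf_eq]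
  rw [my_eval_charpoly, det_formula m n hm hn x hx1' hx2']
  simp only [eval_mul, eval_pow, eval_sub, eval_X, eval_C]
  have e1 : x + (1 - 2*(n:ℝ)) = x - (2*(n:ℝ)-1) := by ring
  have e2 : x + (1 - 2*(m:ℝ)) = x - (2*(m:ℝ)-1) := by ring
  rw [e1, e2]
  congr 1
  have hprod : lam1 (m:ℝ) (n:ℝ) * lam2 (m:ℝ) (n:ℝ)
      = (1 - 2*(n:ℝ))*((m:ℝ)-1) * ((1 - 2*(m:ℝ))*((n:ℝ)-1))
        - (5 - 2*(m:ℝ) - 2*(n:ℝ))^2 * (m:ℝ) * (n:ℝ) := by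
    have h1 : lam1 (m:ℝ) (n:ℝ) * lam2 (m:ℝ) (n:ℝ)
        = ((tval m n)^2 - (sval (m:ℝ) (n:ℝ))^2)/4 := by unfold lam1 lam2; ring
    rw [h1, sval_sq _ _ (Nat.cast_nonneg m) (Nat.cast_nonneg n)]
    unfold tval
    ring
  have hsum' : lam1 (m:ℝ) (n:ℝ) + lam2 (m:ℝ) (n:ℝ)
      = (1 - 2*(n:ℝ))*((m:ℝ)-1) + (1 - 2*(m:ℝ))*((n:ℝ)-1) := by unfold lam1 lam2 tval; ring
  have hq : (x - lam1 (m:ℝ) (n:ℝ)) * (x - lam2 (m:ℝ) (n:ℝ))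
      = x^2 - (lam1 (m:ℝ) (n:ℝ) + lam2 (m:ℝ) (n:ℝ)) * x + lam1 (m:ℝ) (n:ℝ) * lam2 (m:ℝ) (n:ℝ) := by
    ring
  rw [hq, hsum', hprod]
  ring

lemma roots_eq (m n : ℕ) (r1 r2 u v : ℝ) :
    ((X - C r1)^(m-1) * (X - C r2)^(n-1) * ((X - C u) * (X - C v))).roots
      = Multiset.replicate (m-1) r1 + Multiset.replicate (n-1) r2 + {u, v} := by
  have h : (X - C r1)^(m-1) * (X - C r2)^(n-1) * ((X - C u) * (X - C v))
      = (Multiset.map (fun a => X - C a)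
          (Multiset.replicate (m-1) r1 + Multiset.replicate (n-1) r2 + {u, v})).prod := by
    simp [Multiset.map_add, Multiset.prod_add, Multiset.map_replicate, Multiset.prod_replicate,
      Multiset.insert_eq_cons]
    ring
  rw [h, Polynomial.roots_multiset_prod_X_sub_C]

lemma signs (M N : ℝ) (hM : 2 ≤ M) (hN : 2 ≤ N) :
    0 < lam1 M N ∧ lam2 M N < 0 := by
  have hs0 : 0 ≤ sval M N := Real.sqrt_nonneg _
  have hs2 : (sval M N)^2 = (N-M)^2 + 4*(5-2*M-2*N)^2*M*N :=
    sval_sq M N (by linarith) (by linarith)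
  have hd : (tval M N)^2 < (sval M N)^2 := by
    rw [hs2]
    unfold tval
    nlinarith [sq_nonneg (M-N), sq_nonneg (M+N-4), sq_nonneg (M*N-2*M-2*N+2),
      mul_pos (by linarith : (0:ℝ) < M-1) (by linarith : (0:ℝ) < N-1),
      mul_nonneg (by linarith : (0:ℝ) ≤ M-2) (by linarith : (0:ℝ) ≤ N-2)]
  constructor
  · unfold lam1; nlinarith
  · unfold lam2; nlinarith

lemma energy_eq (m n : ℕ) (hm : 2 ≤ m) (hn : 2 ≤ n) :
    seidelEnergy (seidelS m n)
      = ((m:ℝ)-1)*(2*(n:ℝ)-1) + ((n:ℝ)-1)*(2*(m:ℝ)-1) + sval m n := by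
  have hm1 : (1:ℕ) ≤ m := le_trans (by norm_num) hm
  have hn1 : (1:ℕ) ≤ n := le_trans (by norm_num) hn
  rw [seidelEnergy, charpoly_eq m n hm1 hn1, roots_eq]
  have hM : (2:ℝ) ≤ (m:ℝ) := by exact_mod_cast hm
  have hN : (2:ℝ) ≤ (n:ℝ) := by exact_mod_cast hn
  obtain ⟨h1, h2⟩ := signs (m:ℝ) (n:ℝ) hM hN
  simp only [Multiset.map_add, Multiset.sum_add, Multiset.map_replicate,
    Multiset.sum_replicate, Multiset.insert_eq_cons, Multiset.map_cons, Multiset.map_singleton,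
    Multiset.sum_cons, Multiset.sum_singleton, nsmul_eq_mul]
  rw [abs_of_pos (by linarith : (0:ℝ) < 2*(n:ℝ)-1), abs_of_pos (by linarith : (0:ℝ) < 2*(m:ℝ)-1),
    abs_of_pos h1, abs_of_neg h2]
  have hcm : ((m - 1 : ℕ) : ℝ) = (m:ℝ) - 1 := by
    push_cast [Nat.cast_sub hm1]; ring
  have hcn : ((n - 1 : ℕ) : ℝ) = (n:ℝ) - 1 := by
    push_cast [Nat.cast_sub hn1]; ring
  rw [hcm, hcn]
  unfold lam1 lam2
  ring

noncomputable def energyF (M N : ℝ) : ℝ :=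
  (M-1)*(2*N-1) + (N-1)*(2*M-1) + sval M N

lemma energyF_symm (M N : ℝ) : energyF M N = energyF N M := by
  unfold energyF sval
  rw [show (N-M)^2 + 4*(5-2*M-2*N)^2*M*N = (M-N)^2 + 4*(5-2*N-2*M)^2*N*M by ring]
  ring

lemma energyF_mono (M N : ℝ) (hM : 3 ≤ M) (hN : 3 ≤ N) :
    energyF (M-1) N < energyF M N := by
  unfold energyF
  have hs : sval (M-1) N ≤ sval M N := by
    unfold sval
    apply Real.sqrt_le_sqrt
    nlinarith [sq_nonneg (2*M+2*N-7), mul_nonneg (by linarith : (0:ℝ) ≤ M-1) (by linarith : (0:ℝ) ≤ N),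
      mul_nonneg (by linarith : (0:ℝ) ≤ N) (sq_nonneg (2*M+2*N-7))]
  nlinarith

theorem stmt19 (m n : ℕ) (hm : 3 ≤ m) (hn : 3 ≤ n) :
    seidelEnergy (seidelS (m - 1) n) < seidelEnergy (seidelS m n) ∧
    seidelEnergy (seidelS m (n - 1)) < seidelEnergy (seidelS m n) := by
  have hm2 : 2 ≤ m := by omega
  have hn2 : 2 ≤ n := by omega
  have hm2' : 2 ≤ m - 1 := by omega
  have hn2' : 2 ≤ n - 1 := by omega
  have hM : (3:ℝ) ≤ (m:ℝ) := by exact_mod_cast hm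
  have hN : (3:ℝ) ≤ (n:ℝ) := by exact_mod_cast hn
  have hcm : ((m - 1 : ℕ) : ℝ) = (m:ℝ) - 1 := by
    push_cast [Nat.cast_sub (by omega : 1 ≤ m)]; ring
  have hcn : ((n - 1 : ℕ) : ℝ) = (n:ℝ) - 1 := by
    push_cast [Nat.cast_sub (by omega : 1 ≤ n)]; ring
  have e0 : seidelEnergy (seidelS m n) = energyF (m:ℝ) (n:ℝ) := energy_eq m n hm2 hn2
  have e1 : seidelEnergy (seidelS (m-1) n) = energyF ((m:ℝ)-1) (n:ℝ) := by
    rw [energy_eq (m-1) n hm2' hn2, hcm]; rfl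
  have e2 : seidelEnergy (seidelS m (n-1)) = energyF (m:ℝ) ((n:ℝ)-1) := by
    rw [energy_eq m (n-1) hm2 hn2', hcn]; rfl
  constructor
  · rw [e0, e1]
    exact energyF_mono (m:ℝ) (n:ℝ) hM hN
  · rw [e0, e2, energyF_symm (m:ℝ) ((n:ℝ)-1), energyF_symm (m:ℝ) (n:ℝ)]
    exact energyF_mono (n:ℝ) (m:ℝ) hN hM
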